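/- Let m and N be positive integers. The trace of the N×N complex matrix ∑_{i : {1,…,m} → {1,…,N}} F_{i(1), i(2)} · F_{i(2), i(3)} ⋯ F_{i(m−1), i(m)} · F_{i(m), i(1)} (the matrix product over the standard cyclic permutation 1↦2↦⋯↦m↦1) equals (N−1)^m + 1 − N if m is odd, and (N−1)^m − 1 + N² if m is even. (Equivalently, the value of the so(N)-weight system in the standard representation, which is (1/N) times this trace, on the standard cycle of length m is ((N−1)^m + 1 − N)/N for m odd and ((N−1)^m − 1 + N²)/N for m even.) -/

import Mathlib

open scoped BigOperators

section cyc
variable {ι : Type*} [Fintype ι] [DecidableEq ι] {R : Type*} [Ring R]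

/-- Entries of a matrix power as a sum over chains. -/
lemma pow_apply_chain (M : Matrix ι ι R) :
    ∀ (n : ℕ) (a b : ι), (M ^ (n+1)) a b =
      ∑ j : Fin n → ι,
        ((List.finRange (n+1)).map fun k =>
          M (Fin.cons (α := fun _ => ι) a j k) (Fin.snoc (α := fun _ => ι) j b k)).prod := by
  intro n
  induction n with
  | zero =>
    intro a b
    simp [List.finRange_succ, Fin.snoc]
  | succ n ih =>
    intro a b
    rw [pow_succ, Matrix.mul_apply]
    rw [← (Fin.snocEquiv (fun _ : Fin (n+1) => ι)).sum_comp]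
    rw [Fintype.sum_prod_type]
    refine Finset.sum_congr rfl fun c _ => ?_
    rw [ih a c, Finset.sum_mul]
    refine Finset.sum_congr rfl fun j _ => ?_
    have hlist : (List.finRange (n+2)) = (List.finRange (n+1)).map Fin.castSucc ++ [Fin.last (n+1)] :=
      List.finRange_succ_last
    rw [Fin.snocEquiv]
    simp only [Equiv.coe_fn_mk]
    rw [hlist, List.map_append, List.prod_append, List.map_map, List.map_singleton,
      List.prod_singleton]
    congr 1
    · refine congrArg List.prod (List.map_congr_left fun k _ => ?_)
      simp only [Function.comp_apply]
      rw [Fin.cons_snoc_eq_snoc_cons, Fin.snoc_castSucc, Fin.snoc_castSucc]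
    · rw [Fin.cons_snoc_eq_snoc_cons, Fin.snoc_last, Fin.snoc_last]

lemma cons_rotate {n : ℕ} (a : ι) (j : Fin n → ι) (k : Fin (n+1)) :
    Fin.cons (α := fun _ => ι) a j (finRotate (n+1) k) = Fin.snoc (α := fun _ => ι) j a k := by
  refine Fin.lastCases ?_ ?_ k
  · rw [finRotate_last, Fin.cons_zero, Fin.snoc_last]
  · intro l
    have h1 : finRotate (n+1) l.castSucc = l.succ := by
      rw [finRotate_succ_apply, Fin.coeSucc_eq_succ]
    rw [h1, Fin.cons_succ, Fin.snoc_castSucc]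

/-- The trace of a matrix power as a sum over cyclic chains. -/
lemma trace_pow_cyc (M : Matrix ι ι R) (n : ℕ) :
    ∑ i : Fin (n+1) → ι,
        ((List.finRange (n+1)).map fun k => M (i k) (i (finRotate (n+1) k))).prod
      = Matrix.trace (M ^ (n+1)) := by
  rw [Matrix.trace]
  simp only [Matrix.diag]
  rw [← (Fin.consEquiv (fun _ : Fin (n+1) => ι)).sum_comp, Fintype.sum_prod_type]
  refine Finset.sum_congr rfl fun a _ => ?_
  rw [pow_apply_chain M n a a]
  refine Finset.sum_congr rfl fun j _ => ?_
  rw [Fin.consEquiv]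
  simp only [Equiv.coe_fn_mk]
  refine congrArg List.prod (List.map_congr_left fun k _ => ?_)
  rw [cons_rotate]

end cyc

lemma sum_std_diag (N : ℕ) : ∑ d : Fin N, Matrix.single d d (1:ℂ) = 1 := by
  refine Matrix.ext fun i j => ?_
  by_cases h : i = j
  · subst h
    simp [Matrix.sum_apply, Matrix.single, Matrix.one_apply]
  · rw [Matrix.sum_apply, Finset.sum_eq_zero, Matrix.one_apply_ne h]
    intro c _
    simp [Matrix.single]
    rintro rfl
    exact fun hj => h hj

noncomputable def PPm (N : ℕ) : Matrix (Fin N) (Fin N) (Matrix (Fin N) (Fin N) ℂ) :=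
  fun a b => Matrix.single a b 1

noncomputable def QQm (N : ℕ) : Matrix (Fin N) (Fin N) (Matrix (Fin N) (Fin N) ℂ) :=
  fun a b => Matrix.single b.rev a.rev 1

lemma PPm_mul_PPm (N : ℕ) : PPm N * PPm N = (N:ℂ) • PPm N := by
  refine Matrix.ext fun a b => ?_
  rw [Matrix.mul_apply]
  simp only [PPm, Matrix.single_mul_single_same, one_mul, Finset.sum_const,
    Finset.card_univ, Fintype.card_fin, Matrix.smul_apply]
  rw [← Nat.cast_smul_eq_nsmul ℂ]

lemma PPm_mul_QQm (N : ℕ) : PPm N * QQm N = PPm N := by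
  refine Matrix.ext fun a b => ?_
  rw [Matrix.mul_apply, Finset.sum_eq_single b.rev]
  · simp [PPm, QQm]
  · intro c _ hc
    exact Matrix.single_mul_single_of_ne _ _ _ _ hc _
  · simp

lemma QQm_mul_PPm (N : ℕ) : QQm N * PPm N = PPm N := by
  refine Matrix.ext fun a b => ?_
  rw [Matrix.mul_apply, Finset.sum_eq_single a.rev]
  · simp [PPm, QQm]
  · intro c _ hc
    exact Matrix.single_mul_single_of_ne _ _ _ _ (fun hr => hc hr.symm) _
  · simp

lemma QQm_mul_QQm (N : ℕ) : QQm N * QQm N = 1 := by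
  refine Matrix.ext fun a b => ?_
  rw [Matrix.mul_apply]
  by_cases h : a = b
  · subst h
    simp only [QQm, Matrix.single_mul_single_same, one_mul]
    rw [Matrix.one_apply_eq, ← sum_std_diag N]
    exact Fintype.sum_bijective Fin.rev Fin.rev_bijective _ _ (fun c => rfl)
  · rw [Matrix.one_apply_ne h]
    simp only [QQm]
    exact Finset.sum_eq_zero fun c _ =>
      Matrix.single_mul_single_of_ne _ _ _ _ (fun hr => h (Fin.rev_injective hr)) _

theorem keyPow (N : ℕ) :
    ∀ n : ℕ, (N:ℂ) • (PPm N - QQm N) ^ (n+1)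
      = ((((N:ℂ)-1)^(n+1) - (-1:ℂ)^(n+1)) • PPm N)
        + ((-1:ℂ)^(n+1) * N) • (if Odd (n+1) then QQm N else 1) := by
  have hPP := PPm_mul_PPm N
  have hPQ := PPm_mul_QQm N
  have hQP := QQm_mul_PPm N
  have hQQ := QQm_mul_QQm N
  intro n
  induction n with
  | zero =>
    simp only [zero_add, pow_one]
    rw [if_pos odd_one]
    match_scalars <;> ring
  | succ n ih =>
    have step : (N:ℂ) • (PPm N - QQm N) ^ (n+2)
        = ((N:ℂ) • (PPm N - QQm N) ^ (n+1)) * (PPm N - QQm N) := by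
      rw [pow_succ, smul_mul_assoc]
    rw [step, ih]
    rcases Nat.even_or_odd (n+1) with h | h
    · rw [if_neg (Nat.not_odd_iff_even.mpr h), if_pos (Even.add_one h)]
      simp only [add_mul, smul_mul_assoc, mul_sub, sub_mul, one_mul, hPP, hPQ, hQP, hQQ]
      match_scalars <;> ring
    · rw [if_pos h, if_neg (Nat.not_odd_iff_even.mpr (Odd.add_one h))]
      simp only [add_mul, smul_mul_assoc, mul_sub, sub_mul, one_mul, hPP, hPQ, hQP, hQQ]
      match_scalars <;> ring

lemma trace_trace_PPm (N : ℕ) : Matrix.trace (Matrix.trace (PPm N)) = (N:ℂ) := by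
  simp [Matrix.trace, Matrix.diag, PPm, Matrix.sum_apply, Matrix.single]

lemma trace_trace_QQm (N : ℕ) : Matrix.trace (Matrix.trace (QQm N)) = (N:ℂ) := by
  have hc : ∀ x y : Fin N, (y.rev = x) = (y = x.rev) := fun x y =>
    propext ⟨fun h => by rw [← h, Fin.rev_rev], fun h => by rw [h, Fin.rev_rev]⟩
  simp [Matrix.trace, Matrix.diag, QQm, Matrix.sum_apply, Matrix.single, hc,
    Finset.filter_eq']

lemma trace_trace_one (N : ℕ) :
    Matrix.trace (Matrix.trace (1 : Matrix (Fin N) (Fin N) (Matrix (Fin N) (Fin N) ℂ)))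
      = (N:ℂ)^2 := by
  rw [Matrix.trace_one, Fintype.card_fin, ← nsmul_one, Matrix.trace_smul, Matrix.trace_one]
  simp [sq]

/-- The standard generator `F i j = E_{i j} − E_{N+1−j, N+1−i}` of `so(N)`, viewed as an
`N × N` complex matrix. -/
noncomputable def soF (N : ℕ) (i j : Fin N) : Matrix (Fin N) (Fin N) ℂ :=
  Matrix.single i j 1 - Matrix.single j.rev i.rev 1

/-- The trace of `∑_i F_{i 1, i 2} F_{i 2, i 3} ⋯ F_{i m, i 1}` (the product taken along the
standard cyclic permutation `σ = finRotate m`, sending `k` to `k + 1` mod `m`) equals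
`(N−1)^m + 1 − N` for `m` odd and `(N−1)^m − 1 + N²` for `m` even. -/
theorem trace_wso_standard_cycle (m N : ℕ) (hm : 0 < m) (hN : 0 < N) :
    Matrix.trace
        (∑ i : Fin m → Fin N,
          ((List.finRange m).map fun k => soF N (i k) (i (finRotate m k))).prod)
      = if Odd m then ((N : ℂ) - 1) ^ m + 1 - N
        else ((N : ℂ) - 1) ^ m - 1 + (N : ℂ) ^ 2 := by
  obtain ⟨n, rfl⟩ : ∃ n, m = n + 1 := ⟨m - 1, (Nat.succ_pred_eq_of_pos hm).symm⟩
  have hG : (∑ i : Fin (n+1) → Fin N,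
      ((List.finRange (n+1)).map fun k => soF N (i k) (i (finRotate (n+1) k))).prod)
      = Matrix.trace ((PPm N - QQm N) ^ (n+1)) := by
    rw [← trace_pow_cyc]
    rfl
  rw [hG]
  have hkey := keyPow N n
  have hEq := congrArg (fun X => Matrix.trace (Matrix.trace X)) hkey
  simp only [Matrix.trace_smul, Matrix.trace_add, smul_eq_mul, trace_trace_PPm,
    apply_ite Matrix.trace, trace_trace_QQm, trace_trace_one] at hEq
  have hN' : (N:ℂ) ≠ 0 := Nat.cast_ne_zero.mpr hN.ne'
  rcases Nat.even_or_odd (n+1) with h | h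
  · rw [if_neg (Nat.not_odd_iff_even.mpr h)] at hEq ⊢
    apply mul_left_cancel₀ hN'
    rw [hEq, Even.neg_one_pow h]
    ring
  · rw [if_pos h] at hEq ⊢
    apply mul_left_cancel₀ hN'
    rw [hEq, Odd.neg_one_pow h]
    ring
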